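/- Under the hypotheses |a_0| < 1, a_{-r} ≠ 0, for any z with |z| ≥ 1 and any integer ℓ ≥ 0, the ratio of confluent Vandermonde determinants built from the roots of the characteristic equation z κ^r = Σ_{k=-r}^{0} a_k κ^{r+k} satisfies det K_{ℓ,ℓ+r-1}(z) / det K_{0,r-1}(z) = (-1)^{ℓr} (a_{-r}/(a_0 - z))^ℓ. -/

import Mathlib

open Matrix Polynomial Finset

/-- The operator `θ = X · d/dX` on polynomials, as a linear endomorphism. -/
noncomputable def theta : Module.End ℂ (Polynomial ℂ) where
  toFun p := Polynomial.X * Polynomial.derivative p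
  map_add' p q := by simp [mul_add]
  map_smul' c p := by simp [mul_smul_comm]

lemma theta_apply (p : ℂ[X]) : theta p = X * derivative p := rfl

lemma theta_X_pow (n : ℕ) : theta (X ^ n : ℂ[X]) = (n : ℂ) • X ^ n := by
  rcases n with _ | m
  · simp [theta_apply]
  · rw [theta_apply, derivative_X_pow, smul_eq_C_mul]
    push_cast
    ring_nf

lemma theta_pow_X_pow (t n : ℕ) : (theta ^ t) (X ^ n : ℂ[X]) = ((n : ℂ) ^ t) • X ^ n := by
  induction t with
  | zero => simp
  | succ t ih =>
    rw [pow_succ, Module.End.mul_apply, theta_X_pow, _root_.map_smul, ih, smul_smul, pow_succ]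
    ring_nf

lemma eval_theta_pow_eq_zero {κ : ℂ} :
    ∀ (t m : ℕ) (u : ℂ[X]), t < m → (X - C κ) ^ m ∣ u → eval κ ((theta ^ t) u) = 0 := by
  intro t
  induction t with
  | zero =>
    intro m u hm hdvd
    obtain ⟨v, rfl⟩ := hdvd
    obtain ⟨m', rfl⟩ := Nat.exists_eq_succ_of_ne_zero (by omega : m ≠ 0)
    simp
  | succ t ih =>
    intro m u hm hdvd
    obtain ⟨v, rfl⟩ := hdvd
    obtain ⟨m', rfl⟩ := Nat.exists_eq_succ_of_ne_zero (by omega : m ≠ 0)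
    rw [pow_succ, Module.End.mul_apply]
    refine ih m' _ (by omega) ?_
    rw [theta_apply, derivative_mul, derivative_pow]
    refine Dvd.dvd.mul_left ?_ X
    have h1 : (X - C κ) ^ m' ∣ (↑(m' + 1) : ℂ[X]) * (X - C κ) ^ (m' + 1 - 1)
        * derivative (X - C κ) * v :=
      ⟨(↑(m' + 1) : ℂ[X]) * derivative (X - C κ) * v, by simp only [Nat.add_sub_cancel]; ring⟩
    have h2 : (X - C κ) ^ m' ∣ (X - C κ) ^ (m' + 1) * derivative v :=
      ⟨(X - C κ) * derivative v, by ring⟩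
    exact dvd_add h1 h2

lemma eval_theta_pow_mul (κ : ℂ) :
    ∀ (m : ℕ) (g : ℂ[X]),
      eval κ ((theta ^ m) ((X - C κ) ^ m * g)) = (m.factorial : ℂ) * κ ^ m * eval κ g := by
  intro m
  induction m with
  | zero => intro g; simp
  | succ m ih =>
    intro g
    have hstep : theta ((X - C κ) ^ (m + 1) * g)
        = (X - C κ) ^ m * (C ((m : ℂ) + 1) * X * g + X * (X - C κ) * derivative g) := by
      rw [theta_apply, derivative_mul, derivative_pow]
      push_cast
      simp only [derivative_X_sub_C, Nat.add_sub_cancel]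
      ring
    rw [pow_succ, Module.End.mul_apply, hstep, ih]
    simp only [eval_add, eval_mul, eval_C, eval_X, eval_sub, Nat.factorial_succ]
    push_cast
    ring

lemma dvd_of_eval_theta {κ : ℂ} (hκ : κ ≠ 0) (q : ℂ[X]) :
    ∀ (b : ℕ), (∀ t < b, eval κ ((theta ^ t) q) = 0) → (X - C κ) ^ b ∣ q := by
  intro b
  induction b with
  | zero => intro _; simp
  | succ b ih =>
    intro h
    obtain ⟨s, rfl⟩ := ih (fun t ht => h t (by omega))
    have h0 : (b.factorial : ℂ) * κ ^ b * eval κ s = 0 := by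
      rw [← eval_theta_pow_mul κ b s]; exact h b (by omega)
    have hs : eval κ s = 0 := by
      have hb : (b.factorial : ℂ) * κ ^ b ≠ 0 :=
        mul_ne_zero (Nat.cast_ne_zero.2 b.factorial_ne_zero) (pow_ne_zero _ hκ)
      exact (mul_eq_zero.1 h0).resolve_left hb
    obtain ⟨w, rfl⟩ := dvd_iff_isRoot.2 hs
    exact ⟨w, by ring⟩

/-- Determinant-quotient identity: for `|z| ≥ 1`, `|a 0| < 1`, `a_{-r} ≠ 0`, if
`κ_1,…,κ_M` (multiplicities `β_j`, summing to `r`) are the roots of the characteristic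
polynomial, then `det K_{ℓ,ℓ+r-1}(z) / det K_{0,r-1}(z) = (-1)^{ℓr} (a_{-r}/(a_0-z))^ℓ`. -/
theorem det_quotient_identity (r M : ℕ) (hr : 1 ≤ r) (a : ℤ → ℂ)
    (ha : a (-(r:ℤ)) ≠ 0) (ha0 : ‖a 0‖ < 1)
    (z : ℂ) (hz : 1 ≤ ‖z‖)
    (κ : Fin M → ℂ) (hinj : Function.Injective κ)
    (β : Fin M → ℕ) (hβ : ∑ j, β j = r)
    (hfact : (∑ k ∈ Finset.Icc (-(r:ℤ)) 0, C (a k) * X ^ ((r : ℤ) + k).toNat)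
        - C z * X ^ r
      = C (a 0 - z) * ∏ j, (X - C (κ j)) ^ β j)
    (e : (Σ j : Fin M, Fin (β j)) ≃ Fin r) (ℓ : ℕ)
    (K : ℕ → Matrix (Fin r) (Fin r) ℂ)
    (hK : ∀ l : ℕ, ∀ (i c : Fin r),
      K l i c = ((l + (i : ℕ) : ℕ) : ℂ) ^ ((e.symm c).2 : ℕ) * κ (e.symm c).1 ^ (l + (i : ℕ))) :
    (K ℓ).det / (K 0).det = (-1) ^ (ℓ * r) * (a (-(r:ℤ)) / (a 0 - z)) ^ ℓ := by
  classical
  obtain ⟨r', rfl⟩ : ∃ r', r = r' + 1 := ⟨r - 1, by omega⟩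
  set p : ℂ[X] := ∏ j, (X - C (κ j)) ^ β j with hp
  set P : ℂ := ∏ j, κ j ^ β j with hPdef
  have hpm : p.Monic := monic_prod_of_monic _ _ fun j _ => (monic_X_sub_C _).pow _
  have hpd : p.natDegree = r' + 1 := by
    rw [hp, natDegree_prod _ _ fun j _ => pow_ne_zero _ (X_sub_C_ne_zero _)]
    simp only [natDegree_pow, natDegree_X_sub_C, mul_one]
    exact hβ
  have haz : a 0 - z ≠ 0 := by
    intro h
    rw [sub_eq_zero] at h
    rw [h] at ha0
    linarith
  have hev0 : eval 0 p = (-1) ^ (r' + 1) * P := by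
    rw [hp, eval_prod]
    have h1 : ∀ j : Fin M, eval 0 ((X - C (κ j)) ^ β j) = (-1) ^ (β j) * κ j ^ β j := by
      intro j
      rw [eval_pow, eval_sub, eval_X, eval_C, zero_sub, neg_pow]
    rw [Finset.prod_congr rfl fun j _ => h1 j, Finset.prod_mul_distrib,
      Finset.prod_pow_eq_pow_sum, hβ, hPdef]
  have hvieta : a (-((r' + 1 : ℕ) : ℤ)) = (a 0 - z) * ((-1) ^ (r' + 1) * P) := by
    have h := congrArg (eval 0) hfact
    rw [eval_sub, eval_mul, eval_mul, eval_C, eval_C, eval_pow, eval_X, hev0,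
      zero_pow (by omega : r' + 1 ≠ 0), mul_zero, sub_zero, eval_finset_sum] at h
    rw [Finset.sum_eq_single_of_mem (-((r' + 1 : ℕ) : ℤ))
      (by rw [Finset.mem_Icc]; omega) ?_] at h
    · rw [eval_mul, eval_C, eval_pow, eval_X] at h
      rw [show (((r' + 1 : ℕ) : ℤ) + -((r' + 1 : ℕ) : ℤ)).toNat = 0 by omega, pow_zero,
        mul_one] at h
      exact h
    · intro k hk hne
      rw [eval_mul, eval_C, eval_pow, eval_X, zero_pow, mul_zero]
      rw [Finset.mem_Icc] at hk
      omega
  have hPne : P ≠ 0 := by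
    intro h
    rw [h, mul_zero, mul_zero] at hvieta
    exact ha hvieta
  have hκ0 : ∀ j, β j ≠ 0 → κ j ≠ 0 := by
    intro j hb hcontra
    exact hPne (Finset.prod_eq_zero (Finset.mem_univ j) (by rw [hcontra, zero_pow hb]))
  -- the fundamental solutions
  set f : Fin (r' + 1) → ℕ → ℂ :=
    fun c n => ((n : ℕ) : ℂ) ^ (((e.symm c).2 : ℕ)) * κ (e.symm c).1 ^ n with hf
  have hKf : ∀ (l : ℕ) (i c : Fin (r' + 1)), K l i c = f c (l + (i : ℕ)) := by
    intro l i c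
    rw [hK, hf]
  -- the linear recurrence satisfied by the fundamental solutions
  have hkey : ∀ (c : Fin (r' + 1)) (n : ℕ),
      ∑ k ∈ Finset.range (r' + 2), p.coeff k * f c (n + k) = 0 := by
    intro c n
    have hsum : (X : ℂ[X]) ^ n * p
        = ∑ k ∈ Finset.range (r' + 2), p.coeff k • (X : ℂ[X]) ^ (n + k) := by
      conv_lhs => rw [p.as_sum_range' (r' + 2) (by omega)]
      rw [Finset.mul_sum]
      refine Finset.sum_congr rfl fun k _ => ?_
      rw [← C_mul_X_pow_eq_monomial, Polynomial.smul_eq_C_mul, pow_add]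
      ring
    have h2 : eval (κ (e.symm c).1) ((theta ^ ((e.symm c).2 : ℕ)) ((X : ℂ[X]) ^ n * p))
        = ∑ k ∈ Finset.range (r' + 2), p.coeff k * f c (n + k) := by
      rw [hsum, map_sum, eval_finset_sum]
      refine Finset.sum_congr rfl fun k _ => ?_
      rw [_root_.map_smul, theta_pow_X_pow, eval_smul, eval_smul, eval_pow, eval_X, hf]
      push_cast
      simp [smul_eq_mul]
    have h3 : eval (κ (e.symm c).1) ((theta ^ ((e.symm c).2 : ℕ)) ((X : ℂ[X]) ^ n * p)) = 0 := by
      refine eval_theta_pow_eq_zero _ (β (e.symm c).1) _ (e.symm c).2.isLt ?_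
      refine Dvd.dvd.mul_left ?_ _
      rw [hp]
      exact Finset.dvd_prod_of_mem _ (Finset.mem_univ _)
    rw [← h2, h3]
  have hrec : ∀ (c : Fin (r' + 1)) (n : ℕ),
      f c (n + (r' + 1)) = ∑ k ∈ Finset.range (r' + 1), (-(p.coeff k)) * f c (n + k) := by
    intro c n
    have h := hkey c n
    rw [Finset.sum_range_succ] at h
    have hc : p.coeff (r' + 1) = 1 := by rw [← hpd]; exact hpm.coeff_natDegree
    rw [hc, one_mul] at h
    rw [eq_neg_of_add_eq_zero_right h, ← Finset.sum_neg_distrib]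
    exact Finset.sum_congr rfl fun k _ => by ring
  -- the determinant shift step
  have hdet : ∀ l, (K (l + 1)).det = P * (K l).det := by
    intro l
    set σ : Equiv.Perm (Fin (r' + 1)) := finRotate (r' + 1) with hσ
    set N : Matrix (Fin (r' + 1)) (Fin (r' + 1)) ℂ := (K l).submatrix σ id with hN
    have hNrow : ∀ i c, N i c = f c (l + ((σ i : Fin (r' + 1)) : ℕ)) := by
      intro i c
      rw [hN, Matrix.submatrix_apply, hKf]
      rfl
    have hσlast : ((σ (Fin.last r') : Fin (r' + 1)) : ℕ) = 0 := by
      rw [hσ, finRotate_last]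
      rfl
    have hσne : ∀ i : Fin (r' + 1), i ≠ Fin.last r' →
        ((σ i : Fin (r' + 1)) : ℕ) = (i : ℕ) + 1 := by
      intro i hi
      rw [hσ, coe_finRotate, if_neg hi]
    have hup : K (l + 1) = N.updateRow (Fin.last r')
        (∑ i, (-(p.coeff ((σ i : Fin (r' + 1)) : ℕ))) • N i) := by
      ext i c
      by_cases hi : i = Fin.last r'
      · subst hi
        rw [Matrix.updateRow_self]
        have h1 : K (l + 1) (Fin.last r') c = f c (l + (r' + 1)) := by
          rw [hKf]
          congr 1
          simp [Fin.val_last]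
          omega
        rw [h1, hrec c l,
          ← Fin.sum_univ_eq_sum_range (fun k => (-(p.coeff k)) * f c (l + k)) (r' + 1),
          ← Equiv.sum_comp σ (fun k : Fin (r' + 1) => (-(p.coeff (k : ℕ))) * f c (l + (k : ℕ)))]
        rw [Finset.sum_apply]
        refine Finset.sum_congr rfl fun i _ => ?_
        simp only [Pi.smul_apply, smul_eq_mul, hNrow]
      · rw [Matrix.updateRow_ne hi, hNrow, hKf, hσne i hi]
        congr 1
        omega
    rw [hup,
      Matrix.det_updateRow_sum N (Fin.last r') (fun i => -(p.coeff ((σ i : Fin (r' + 1)) : ℕ)))]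
    rw [hσlast, hN, Matrix.det_permute, hσ, sign_finRotate]
    have hc0 : p.coeff 0 = (-1) ^ (r' + 1) * P := by
      rw [Polynomial.coeff_zero_eq_eval_zero, hev0]
    rw [hc0]
    have hsgn : ((-1 : ℂ)) ^ (r' + 1) * (-1) ^ r' = -1 := by
      rw [← pow_add]
      exact Odd.neg_one_pow ⟨r', by ring⟩
    push_cast
    simp only [smul_eq_mul]
    linear_combination (-(P * (K l).det)) * hsgn
  -- iterated determinant identity
  have hiter : ∀ l, (K l).det = P ^ l * (K 0).det := by
    intro l
    induction l with
    | zero => simp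
    | succ l ih => rw [hdet l, ih, pow_succ]; ring
  -- nonvanishing of the base determinant (confluent Vandermonde)
  have h0 : (K 0).det ≠ 0 := by
    intro hdet0
    have hdt : ((K 0)ᵀ).det = 0 := by rw [Matrix.det_transpose]; exact hdet0
    obtain ⟨v, hv, hmv⟩ := Matrix.exists_mulVec_eq_zero_iff.2 hdt
    set q : ℂ[X] := ∑ n : Fin (r' + 1), C (v n) * X ^ (n : ℕ) with hq
    have hqeval : ∀ (j : Fin M) (t : ℕ), t < β j → eval (κ j) ((theta ^ t) q) = 0 := by
      intro j t ht
      set c := e ⟨j, ⟨t, ht⟩⟩ with hcdef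
      have hsymm : e.symm c = ⟨j, ⟨t, ht⟩⟩ := Equiv.symm_apply_apply e _
      have h00 : ((K 0)ᵀ *ᵥ v) c = 0 := congrFun hmv c
      rw [Matrix.mulVec, dotProduct] at h00
      have ht2 : (((e.symm c).2 : Fin (β (e.symm c).1)) : ℕ) = t :=
        congrArg (fun x : (Σ j : Fin M, Fin (β j)) => (x.2 : ℕ)) hsymm
      have heq : eval (κ j) ((theta ^ t) q) = ∑ n : Fin (r' + 1), (K 0)ᵀ c n * v n := by
        rw [hq]
        simp only [← Polynomial.smul_eq_C_mul]
        rw [map_sum, eval_finset_sum]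
        refine Finset.sum_congr rfl fun n _ => ?_
        rw [_root_.map_smul, theta_pow_X_pow, Matrix.transpose_apply, hKf, hf]
        simp only [hsymm, ht2, smul_eq_mul, eval_smul, eval_pow, eval_X, Nat.zero_add, zero_add]
        ring
      rw [heq]; exact h00
    have hdvd : p ∣ q := by
      rw [hp]
      refine Finset.prod_dvd_of_coprime ?_ ?_
      · intro i hi j hj hij
        exact (Polynomial.pairwise_coprime_X_sub_C hinj hij).pow
      · intro j _
        by_cases hb : β j = 0
        · simp [hb]
        · exact dvd_of_eval_theta (hκ0 j hb) q (β j) (fun t ht => hqeval j t ht)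
    have hqdeg : q.natDegree < r' + 1 := by
      rw [hq]
      apply Nat.lt_succ_of_le
      refine Polynomial.natDegree_sum_le_of_forall_le _ _ fun n _ => ?_
      refine le_trans (Polynomial.natDegree_C_mul_le _ _) ?_
      rw [natDegree_X_pow]
      exact Nat.lt_succ_iff.mp n.isLt
    have hq0 : q = 0 := by
      by_contra hne
      have h1 := Polynomial.natDegree_le_of_dvd hdvd hne
      omega
    apply hv
    funext n
    have hcoeff : q.coeff (n : ℕ) = v n := by
      rw [hq, Polynomial.finset_sum_coeff]
      rw [Finset.sum_eq_single n]
      · simp [coeff_C_mul, coeff_X_pow]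
      · intro m _ hm
        have hne : (n : ℕ) ≠ (m : ℕ) := fun h => hm (Fin.val_injective h).symm
        simp [coeff_C_mul, coeff_X_pow, hne]
      · intro h
        exact absurd (Finset.mem_univ n) h
    rw [hq0] at hcoeff
    simpa using hcoeff.symm
  -- conclusion
  have hPval : P = (-1) ^ (r' + 1) * (a (-((r' + 1 : ℕ) : ℤ)) / (a 0 - z)) := by
    have hsq : ((-1 : ℂ)) ^ (r' + 1) * (-1) ^ (r' + 1) = 1 := by
      rw [← pow_add]
      exact Even.neg_one_pow ⟨r' + 1, by ring⟩
    have h2 : a (-((r' + 1 : ℕ) : ℤ)) / (a 0 - z) = (-1) ^ (r' + 1) * P := by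
      rw [hvieta, mul_comm, mul_div_assoc, div_self haz, mul_one]
    rw [h2, ← mul_assoc, hsq, one_mul]
  rw [hiter ℓ, mul_div_assoc, div_self h0, mul_one, hPval, mul_pow, ← pow_mul,
    Nat.mul_comm (r' + 1) ℓ]
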